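/- Let W = {w_{j,k}}_{j,k=1,2,3} be a symmetric 3×3 matrix with strictly positive entries such that w_{j,k} ≤ min(w_{j,j}, w_{k,k}) for all j,k. Suppose there exist x₀ ∈ ℝ³ and δ > 0 such that for every x = (x₁,x₂,x₃) in the Euclidean ball B_δ(x₀), the cycle condition (w_{1,2}+x₂)(w_{2,3}+x₃)(w_{3,1}+x₁) = (w_{1,3}+x₃)(w_{2,1}+x₁)(w_{3,2}+x₂) holds. Then there exist Λ₁,Λ₂,Λ₃ ≥ 0 and d ≥ 0 such that w_{j,k} = Λ_j δ_{j,k} + d for all j,k = 1,2,3. -/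

import Mathlib

theorem diag_plus_const_of_cycle_on_ball (w : Fin 3 → Fin 3 → ℝ)
    (hsymm : ∀ j k, w j k = w k j)
    (hpos : ∀ j k, 0 < w j k)
    (hle : ∀ j k, w j k ≤ min (w j j) (w k k))
    (x₀ : EuclideanSpace ℝ (Fin 3)) (δ : ℝ) (hδ : 0 < δ)
    (hcycle : ∀ x ∈ Metric.ball x₀ δ,
      (w 0 1 + x 1) * (w 1 2 + x 2) * (w 2 0 + x 0) =
      (w 0 2 + x 2) * (w 1 0 + x 0) * (w 2 1 + x 1)) :
    ∃ (Λ : Fin 3 → ℝ) (d : ℝ), (∀ j, 0 ≤ Λ j) ∧ 0 ≤ d ∧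
      ∀ j k, w j k = (if j = k then Λ j else 0) + d := by
  set e := δ / 2 with he
  have hepos : 0 < e := by positivity
  have hmem : ∀ v : Fin 3 → ℝ, (∀ i, v i = 0 ∨ v i = e) →
      (WithLp.toLp 2 (fun i => x₀ i + v i) : EuclideanSpace ℝ (Fin 3)) ∈ Metric.ball x₀ δ := by
    intro v hv
    change dist _ _ < δ
    rw [EuclideanSpace.dist_eq, Real.sqrt_lt' hδ]
    have hb : ∀ i : Fin 3, dist ((WithLp.toLp 2 (fun i => x₀ i + v i) : EuclideanSpace ℝ (Fin 3)) i) (x₀ i) ^ 2 ≤ e ^ 2 := by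
      intro i
      rcases hv i with h | h <;> simp [h, Real.dist_eq, abs_of_nonneg hepos.le] <;> positivity
    calc (∑ i : Fin 3, dist ((WithLp.toLp 2 (fun i => x₀ i + v i) : EuclideanSpace ℝ (Fin 3)) i) (x₀ i) ^ 2)
        ≤ ∑ _i : Fin 3, e ^ 2 := Finset.sum_le_sum fun i _ => hb i
      _ < δ ^ 2 := by simp; nlinarith
  have hev : ∀ v : Fin 3 → ℝ, (∀ i, v i = 0 ∨ v i = e) →
      (w 0 1 + (x₀ 1 + v 1)) * (w 1 2 + (x₀ 2 + v 2)) * (w 2 0 + (x₀ 0 + v 0)) =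
      (w 0 2 + (x₀ 2 + v 2)) * (w 1 0 + (x₀ 0 + v 0)) * (w 2 1 + (x₀ 1 + v 1)) := by
    intro v hv
    have := hcycle _ (hmem v hv)
    simpa using this
  have h000 := hev ![0, 0, 0] (by intro i; fin_cases i <;> simp)
  have he00 := hev ![e, 0, 0] (by intro i; fin_cases i <;> simp)
  have h0e0 := hev ![0, e, 0] (by intro i; fin_cases i <;> simp)
  have hee0 := hev ![e, e, 0] (by intro i; fin_cases i <;> simp)
  have h00e := hev ![0, 0, e] (by intro i; fin_cases i <;> simp)
  have he0e := hev ![e, 0, e] (by intro i; fin_cases i <;> simp)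
  simp only [Matrix.cons_val_zero, Matrix.cons_val_one, Matrix.head_cons,
    Matrix.cons_val_two, Matrix.tail_cons, add_zero] at h000 he00 h0e0 hee0 h00e he0e
  have h10 : w 1 0 = w 0 1 := hsymm 1 0
  have h20 : w 2 0 = w 0 2 := hsymm 2 0
  have h21 : w 2 1 = w 1 2 := hsymm 2 1
  rw [h10, h20, h21] at h000 he00 h0e0 hee0 h00e he0e
  have hbc : e ^ 2 * (w 1 2 - w 0 2) = 0 := by linear_combination hee0 - h0e0 - he00 + h000
  have hab : e ^ 2 * (w 0 1 - w 1 2) = 0 := by linear_combination he0e - h00e - he00 + h000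
  have he2 : e ^ 2 ≠ 0 := by positivity
  have hbc' : w 1 2 = w 0 2 := by
    have := mul_eq_zero.mp hbc
    rcases this with h | h
    · exact absurd h he2
    · linarith
  have hab' : w 0 1 = w 1 2 := by
    have := mul_eq_zero.mp hab
    rcases this with h | h
    · exact absurd h he2
    · linarith
  refine ⟨fun j => w j j - w 0 1, w 0 1, ?_, le_of_lt (hpos 0 1), ?_⟩
  · have hΛ : ∀ j : Fin 3, w 0 1 ≤ w j j := by
      intro j
      fin_cases j
      · exact le_trans (hle 0 1) (min_le_left _ _)
      · exact le_trans (hle 0 1) (min_le_right _ _)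
      · exact hab'.le.trans (le_trans (hle 1 2) (min_le_right _ _))
    intro j
    dsimp only
    linarith [hΛ j]
  · intro j k
    fin_cases j <;> fin_cases k <;>
      simp [hsymm 1 0, hsymm 2 0, hsymm 2 1, hab', hbc']
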